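/- arXiv:1707.05049 — 4 statements merged into one kernel-verified Lean document; each statement's English description precedes it below -/
import Mathlib

section
/- Every finite group whose Sylow 2-subgroups are either cyclic or elementary abelian is 2-reduced. -/
open scoped TensorProduct Classical

noncomputable section

universe u

namespace Paper

variable {Γ : Type*} [Group Γ]

/-- The differential on inhomogeneous mod 2 cochains of a group, with trivial
coefficients in `ZMod 2`. -/
def d {n : ℕ} (f : (Fin n → Γ) → ZMod 2) : (Fin (n + 1) → Γ) → ZMod 2 :=
  fun g => f (fun i => g i.succ) + ∑ j : Fin (n + 1), f (Fin.contractNth j (· * ·) g)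

/-- `f` is an (inhomogeneous, mod 2) `n`-cocycle. -/
def IsCocycle {n : ℕ} (f : (Fin n → Γ) → ZMod 2) : Prop := d f = 0

/-- `f` is an (inhomogeneous, mod 2) coboundary; equivalently, the cohomology class of
the cocycle `f` vanishes. -/
def IsCoboundary : {n : ℕ} → ((Fin n → Γ) → ZMod 2) → Prop
  | 0, f => f = 0
  | n + 1, f => ∃ h : (Fin n → Γ) → ZMod 2, d h = f

/-- The cup product of mod 2 cochains (trivial coefficients). -/
def cup {m n : ℕ} (f : (Fin m → Γ) → ZMod 2) (h : (Fin n → Γ) → ZMod 2) :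
    (Fin (m + n) → Γ) → ZMod 2 :=
  fun g => f (fun i => g (Fin.castAdd n i)) * h (fun i => g (Fin.natAdd m i))

/-- Iterated cup powers of a degree 2 cochain. -/
def cupPow (f : (Fin 2 → Γ) → ZMod 2) : (k : ℕ) → (Fin (2 * k) → Γ) → ZMod 2
  | 0 => fun _ => 1
  | k + 1 => cup (cupPow f k) f

/-- Restriction of a mod 2 cochain of `G` to a subgroup `H`. -/
def res {G : Type*} [Group G] (H : Subgroup G) {n : ℕ}
    (f : (Fin n → G) → ZMod 2) : (Fin n → H) → ZMod 2 :=
  fun g => f fun i => (g i : G)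

/-- A group `G` is 2-reduced if `H²(G, ℤ/2)` contains no nonzero nilpotent element of the
mod 2 cohomology ring `H^*(G, ℤ/2)`: every 2-cocycle, some nonzero cup power of which is a
coboundary, is itself a coboundary. -/
def IsTwoReduced (G : Type*) [Group G] : Prop :=
  ∀ f : (Fin 2 → G) → ZMod 2, IsCocycle f →
    (∃ k : ℕ, 0 < k ∧ IsCoboundary (cupPow f k)) → IsCoboundary f

/-- A (continuous = locally constant) mod 2 cochain of a topological group is a
coboundary for continuous group cohomology. -/
def IsCoboundaryLC {Γ : Type*} [Group Γ] [TopologicalSpace Γ] :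
    {n : ℕ} → ((Fin n → Γ) → ZMod 2) → Prop
  | 0, f => f = 0
  | n + 1, f => ∃ h : (Fin n → Γ) → ZMod 2, IsLocallyConstant h ∧ d h = f

/-- An algebraic (here: separable, since we only use it in characteristic ≠ 2 where we
take care only of separable phenomena) closure of `K`. -/
abbrev Kbar (K : Type*) [Field K] := AlgebraicClosure K

/-- The absolute Galois group of `K`, with its Krull topology. -/
abbrev GalK (K : Type*) [Field K] := Kbar K ≃ₐ[K] Kbar K

/-- A chosen square root of (the image of) `a` in `Kbar K`. -/
def sqrtb (K : Type*) [Field K] (a : K) : Kbar K :=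
  Classical.choose (IsAlgClosed.exists_pow_nat_eq (algebraMap K (Kbar K) a) (n := 2)
    (by norm_num))

/-- The Kummer 1-cocycle of the absolute Galois group of `K` attached to the square class
of `a ∈ K`: its class is the image of `a` under `K^×/(K^×)² ≅ H¹(G_K, ℤ/2)`. -/
def sqClass (K : Type*) [Field K] (a : K) : (Fin 1 → GalK K) → ZMod 2 :=
  fun g => if g 0 (sqrtb K a) = sqrtb K a then 0 else 1

/-- A cocycle representing the `m`-th Hasse-Witt invariant
`w_m(q) = ∑_{i₁ < ⋯ < i_m} (a_{i₁})⋯(a_{i_m}) ∈ H^m(G_K, ℤ/2)`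
of the diagonal quadratic form `⟨a 0, …, a (n-1)⟩` over `K`. -/
def hw (K : Type*) [Field K] {n : ℕ} (a : Fin n → K) (m : ℕ) :
    (Fin m → GalK K) → ZMod 2 :=
  fun g =>
    ∑ s ∈ (Finset.powersetCard m (Finset.univ : Finset (Fin n))).attach,
      ∏ j : Fin m,
        sqClass K (a ((s.1.orderIsoOfFin (Finset.mem_powersetCard.mp s.2).2 j : Fin n)))
          (fun _ => g j)

/-- The trace form `q_L(x) = Tr_{L/K}(x²)` of a `K`-algebra `L`, as a quadratic form. -/
def traceFormQ (K L : Type*) [Field K] [CommRing L] [Algebra K L] : QuadraticForm K L :=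
  LinearMap.BilinMap.toQuadraticMap (Algebra.traceForm K L)

/-- `L` is a `G`-Galois algebra over `K`: an étale `K`-algebra of degree `|G|` on which `G`
acts (by `K`-algebra automorphisms) in such a way that the action on
`Hom^{alg}_K(L, K^s)` is simply transitive. -/
def IsGaloisAlgebra (G : Type*) [Group G] (K L : Type u) [Field K] [CommRing L] [Algebra K L]
    [MulSemiringAction G L] [SMulCommClass G K L] : Prop :=
  Algebra.Etale K L ∧ Module.finrank K L = Nat.card G ∧
    ∀ χ χ' : L →ₐ[K] Kbar K, ∃! g : G, χ' = χ.comp (MulSemiringAction.toAlgHom K L g)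

/-- `L ⊗_K K_v` is a split algebra at the real place of `K` given by the embedding
`φ : K → ℝ`. -/
def SplitsAtReal (K L : Type*) [Field K] [CommRing L] [Algebra K L] (n : ℕ)
    (φ : K →+* ℝ) : Prop :=
  letI : Algebra K ℝ := φ.toAlgebra
  Nonempty (TensorProduct K ℝ L ≃ₐ[ℝ] (Fin n → ℝ))

/-- An étale `ℚ`-algebra of degree `n` is totally real if `L ⊗_ℚ ℝ` is split. -/
def TotallyRealAlg (L : Type*) [CommRing L] [Algebra ℚ L] (n : ℕ) : Prop :=
  Nonempty (TensorProduct ℚ ℝ L ≃ₐ[ℝ] (Fin n → ℝ))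

/-- An étale `ℚ`-algebra of degree `n` is totally imaginary if `L ⊗_ℚ ℝ` is a product of
`n/2` copies of `ℂ`. -/
def TotallyImaginaryAlg (L : Type*) [CommRing L] [Algebra ℚ L] (n : ℕ) : Prop :=
  Nonempty (TensorProduct ℚ ℝ L ≃ₐ[ℝ] (Fin (n / 2) → ℂ))

/-- A group is metacyclic if it is an extension of a cyclic group by a cyclic group. -/
def IsMetacyclic (G : Type*) [Group G] : Prop :=
  ∃ N : Subgroup G, IsCyclic N ∧ ∃ hN : N.Normal, haveI := hN; IsCyclic (G ⧸ N)


/-- The unit quadratic form `⟨1, …, 1⟩` on `ι → k`. -/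
def unitQF (k : Type*) [Field k] (ι : Type*) [Fintype ι] : QuadraticForm k (ι → k) :=
  QuadraticMap.weightedSumSquares k fun _ : ι => (1 : k)

end Paper
namespace Statement8Aux

open Paper

variable {Γ : Type*} [Group Γ]

lemma zmod2_add_self (x : ZMod 2) : x + x = 0 := by
  rw [← two_mul, show (2 : ZMod 2) = 0 from rfl, zero_mul]

lemma d_one_apply (U : Γ → ZMod 2) (g : Fin 2 → Γ) :
    d (fun t : Fin 1 → Γ => U (t 0)) g = U (g 1) + (U (g 0 * g 1) + U (g 0)) := by
  show U ((fun i : Fin 1 => g i.succ) 0) + ∑ j : Fin 2, U (Fin.contractNth j (· * ·) g 0) = _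
  rw [Fin.sum_univ_two]
  rfl

lemma isCoboundary_of_pointwise (f : (Fin 2 → Γ) → ZMod 2) (U : Γ → ZMod 2)
    (hU : ∀ a b : Γ, U b + U (a * b) + U a = f ![a, b]) : IsCoboundary f := by
  refine ⟨fun t => U (t 0), funext fun g => ?_⟩
  have h1 : (![g 0, g 1] : Fin 2 → Γ) = g := by
    funext i; fin_cases i <;> rfl
  have h2 := hU (g 0) (g 1)
  rw [h1] at h2
  rw [d_one_apply]
  linear_combination h2

lemma rel_of_isCocycle {f : (Fin 2 → Γ) → ZMod 2} (hf : IsCocycle f) (a b c : Γ) :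
    f ![b, c] + f ![a * b, c] + f ![a, b * c] + f ![a, b] = 0 := by
  have h0 := congrFun hf ![a, b, c]
  have e0 : (fun i : Fin 2 => (![a, b, c]) i.succ) = ![b, c] := by
    funext i; fin_cases i <;> rfl
  have e1 : Fin.contractNth (0 : Fin 3) (· * ·) ![a, b, c] = ![a * b, c] := by
    funext k; fin_cases k <;> rfl
  have e2 : Fin.contractNth (1 : Fin 3) (· * ·) ![a, b, c] = ![a, b * c] := by
    funext k; fin_cases k <;> rfl
  have e3 : Fin.contractNth (2 : Fin 3) (· * ·) ![a, b, c] = ![a, b] := by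
    funext k; fin_cases k <;> rfl
  have h0' : f (fun i : Fin 2 => (![a, b, c]) i.succ)
      + ∑ j : Fin 3, f (Fin.contractNth j (· * ·) ![a, b, c]) = 0 := h0
  rw [Fin.sum_univ_three (fun j : Fin 3 => f (Fin.contractNth j (· * ·) ![a, b, c]))] at h0'
  rw [e0, e1, e2, e3] at h0'
  linear_combination h0'

section Phi

/-- The `{1,a}`-tuple attached to a boolean vector. -/
def tup (a : Γ) {n : ℕ} (v : Fin n → Bool) : Fin n → Γ := fun i => cond (v i) a 1

/-- Sum of the values of a cochain over all `{1,a}`-tuples. -/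
def phi (a : Γ) {n : ℕ} (F : (Fin n → Γ) → ZMod 2) : ZMod 2 :=
  ∑ v : Fin n → Bool, F (tup a v)

lemma phi_d (a : Γ) (ha : a * a = 1) {n : ℕ} (hh : (Fin n → Γ) → ZMod 2) :
    phi a (d hh) = 0 := by
  classical
  have hsplit : phi a (d hh) =
      (∑ v : Fin (n + 1) → Bool, hh (fun i => tup a v i.succ)) +
        ∑ j : Fin (n + 1), ∑ v : Fin (n + 1) → Bool,
          hh (Fin.contractNth j (· * ·) (tup a v)) := by
    unfold phi d
    rw [Finset.sum_add_distrib]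
    congr 1
    exact Finset.sum_comm
  rw [hsplit]
  have h1 : (∑ v : Fin (n + 1) → Bool, hh (fun i => tup a v i.succ)) = 0 := by
    apply Finset.sum_ninvolution (fun v => Function.update v 0 (!(v 0)))
    · intro v
      have he : (fun i : Fin n => tup a (Function.update v 0 (!(v 0))) i.succ)
          = fun i => tup a v i.succ := by
        funext i
        simp [tup, Function.update_of_ne (Fin.succ_ne_zero i)]
      rw [he]
      exact zmod2_add_self _
    · intro v hv heq
      have := congrFun heq 0
      simp at this
    · intro v; exact Finset.mem_univ _
    · intro v
      funext i
      by_cases hi : i = (0 : Fin (n + 1))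
      · subst hi; simp
      · simp [Function.update_of_ne hi]
  have h2 : ∀ j : Fin (n + 1),
      (∑ v : Fin (n + 1) → Bool, hh (Fin.contractNth j (· * ·) (tup a v))) = 0 := by
    intro j
    set gj : (Fin (n + 1) → Bool) → (Fin (n + 1) → Bool) :=
      fun v i => if (i : ℕ) = (j : ℕ) ∨ (i : ℕ) = (j : ℕ) + 1 then !(v i) else v i with hgj
    have key : ∀ v, Fin.contractNth j (· * ·) (tup a (gj v))
        = Fin.contractNth j (· * ·) (tup a v) := by
      intro v
      funext k
      rcases lt_trichotomy (k : ℕ) (j : ℕ) with hk | hk | hk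
      · rw [Fin.contractNth_apply_of_lt _ _ _ _ hk, Fin.contractNth_apply_of_lt _ _ _ _ hk]
        have hne : ¬ (((k.castSucc : Fin (n + 1)) : ℕ) = (j : ℕ) ∨
            ((k.castSucc : Fin (n + 1)) : ℕ) = (j : ℕ) + 1) := by
          simp only [Fin.coe_castSucc]
          omega
        simp only [tup, hgj, if_neg hne]
      · rw [Fin.contractNth_apply_of_eq _ _ _ _ hk, Fin.contractNth_apply_of_eq _ _ _ _ hk]
        have hc1 : (((k.castSucc : Fin (n + 1)) : ℕ) = (j : ℕ) ∨
            ((k.castSucc : Fin (n + 1)) : ℕ) = (j : ℕ) + 1) := by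
          simp only [Fin.coe_castSucc]; omega
        have hc2 : (((k.succ : Fin (n + 1)) : ℕ) = (j : ℕ) ∨
            ((k.succ : Fin (n + 1)) : ℕ) = (j : ℕ) + 1) := by
          simp only [Fin.val_succ]; omega
        simp only [tup, hgj, if_pos hc1, if_pos hc2]
        cases hv1 : v k.castSucc <;> cases hv2 : v k.succ <;> simp [ha]
      · rw [Fin.contractNth_apply_of_gt _ _ _ _ hk, Fin.contractNth_apply_of_gt _ _ _ _ hk]
        have hne : ¬ (((k.succ : Fin (n + 1)) : ℕ) = (j : ℕ) ∨
            ((k.succ : Fin (n + 1)) : ℕ) = (j : ℕ) + 1) := by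
          simp only [Fin.val_succ]; omega
        simp only [tup, hgj, if_neg hne]
    apply Finset.sum_ninvolution gj
    · intro v
      rw [key]
      exact zmod2_add_self _
    · intro v hv heq
      have := congrFun heq j
      simp [hgj] at this
    · intro v; exact Finset.mem_univ _
    · intro v
      funext i
      simp only [hgj]
      by_cases hc : (i : ℕ) = (j : ℕ) ∨ (i : ℕ) = (j : ℕ) + 1
      · rw [if_pos hc, if_pos hc, Bool.not_not]
      · rw [if_neg hc, if_neg hc]
  rw [h1, Finset.sum_eq_zero (fun j _ => h2 j), add_zero]

lemma phi_cup (a : Γ) {m n : ℕ} (F : (Fin m → Γ) → ZMod 2) (H : (Fin n → Γ) → ZMod 2) :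
    phi a (cup F H) = phi a F * phi a H := by
  classical
  let e : ((Fin m → Bool) × (Fin n → Bool)) ≃ (Fin (m + n) → Bool) :=
    { toFun := fun p => Fin.append p.1 p.2
      invFun := fun v => (fun i => v (Fin.castAdd n i), fun i => v (Fin.natAdd m i))
      left_inv := by
        rintro ⟨u, w⟩
        refine Prod.ext ?_ ?_
        · funext i; exact Fin.append_left u w i
        · funext i; exact Fin.append_right u w i
      right_inv := by
        intro v
        funext i
        refine Fin.addCases (fun l => ?_) (fun r => ?_) i
        · exact Fin.append_left _ _ l
        · exact Fin.append_right _ _ r }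
  have hmain : phi a (cup F H)
      = ∑ p : (Fin m → Bool) × (Fin n → Bool), F (tup a p.1) * H (tup a p.2) := by
    refine (Fintype.sum_equiv e (fun p => F (tup a p.1) * H (tup a p.2))
      (fun v => cup F H (tup a v)) ?_).symm
    intro p
    show F (tup a p.1) * H (tup a p.2) = cup F H (tup a (Fin.append p.1 p.2))
    unfold cup
    congr 1
    · congr 1
      funext i
      show tup a p.1 i = _
      unfold tup
      rw [Fin.append_left]
    · congr 1
      funext i
      show tup a p.2 i = _
      unfold tup
      rw [Fin.append_right]
  rw [hmain, Fintype.sum_prod_type]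
  rw [phi, phi, Finset.sum_mul_sum]

lemma phi_cupPow (a : Γ) (f : (Fin 2 → Γ) → ZMod 2) (k : ℕ) :
    phi a (cupPow f k) = (phi a f) ^ k := by
  induction k with
  | zero =>
      show (∑ v : Fin 0 → Bool, (1 : ZMod 2)) = 1
      simp
  | succ k ih =>
      show phi a (cup (cupPow f k) f) = _
      rw [phi_cup, ih, pow_succ]

lemma phi_two (a : Γ) (f : (Fin 2 → Γ) → ZMod 2) :
    phi a f = f ![a, a] + f ![a, 1] + f ![1, a] + f ![1, 1] := by
  classical
  let e : (Bool × Bool) ≃ (Fin 2 → Bool) :=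
    { toFun := fun p => ![p.1, p.2]
      invFun := fun v => (v 0, v 1)
      left_inv := by rintro ⟨x, y⟩; rfl
      right_inv := by intro v; funext i; fin_cases i <;> rfl }
  have hmain : phi a f = ∑ p : Bool × Bool, f (tup a ![p.1, p.2]) :=
    (Fintype.sum_equiv e (fun p => f (tup a ![p.1, p.2])) (fun v => f (tup a v))
      (fun p => rfl)).symm
  rw [hmain, Fintype.sum_prod_type, Fintype.sum_bool]
  rw [Fintype.sum_bool, Fintype.sum_bool]
  have h1 : tup a ![true, true] = ![a, a] := by funext i; fin_cases i <;> rfl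
  have h2 : tup a ![true, false] = ![a, 1] := by funext i; fin_cases i <;> rfl
  have h3 : tup a ![false, true] = ![1, a] := by funext i; fin_cases i <;> rfl
  have h4 : tup a ![false, false] = ![1, 1] := by funext i; fin_cases i <;> rfl
  rw [h1, h2, h3, h4]
  ring

end Phi

section Split

/-- An exponent-two group is commutative. -/
lemma exp_two_comm {K : Type*} [Group K] (hs : ∀ z : K, z * z = 1) (a b : K) :
    a * b = b * a := by
  have hinv : ∀ z : K, z⁻¹ = z := fun z => inv_eq_of_mul_eq_one_right (hs z)
  calc a * b = (a * b)⁻¹ := (hinv _).symm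
    _ = b⁻¹ * a⁻¹ := mul_inv_rev a b
    _ = b * a := by rw [hinv, hinv]

lemma F_one_left {H : Type*} [Group H] (F : H → H → ZMod 2)
    (hC : ∀ a b c, F b c + F (a * b) c + F a (b * c) + F a b = 0) (x : H) :
    F 1 x = F 1 1 := by
  have h := hC 1 1 x
  rw [one_mul, one_mul] at h
  linear_combination h - zmod2_add_self (F 1 x) - zmod2_add_self (F 1 1)

lemma F_one_right {H : Type*} [Group H] (F : H → H → ZMod 2)
    (hC : ∀ a b c, F b c + F (a * b) c + F a (b * c) + F a b = 0) (x : H) :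
    F x 1 = F 1 1 := by
  have h := hC x 1 1
  rw [mul_one, one_mul] at h
  linear_combination h - zmod2_add_self (F x 1) - zmod2_add_self (F 1 1)

/-- Splitting for cyclic 2-groups: discrete integration of the cocycle. -/
lemma cyclic_split {H : Type*} [Group H] [Finite H] (hcyc : IsCyclic H)
    (hp : IsPGroup 2 H) (F : H → H → ZMod 2)
    (hC : ∀ a b c, F b c + F (a * b) c + F a (b * c) + F a b = 0)
    (hI : ∀ a : H, a * a = 1 → F a a = F 1 1) :
    ∃ U : H → ZMod 2, ∀ a b, U b + U (a * b) + U a = F a b := by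
  classical
  have hEr : ∀ x : H, F x 1 = F 1 1 := F_one_right F hC
  haveI := hcyc
  obtain ⟨g, hg⟩ := IsCyclic.exists_monoid_generator (α := H)
  have hgx : ∀ x : H, ∃ i : ℕ, g ^ i = x := fun x =>
    (Submonoid.mem_powers_iff x g).mp (hg x)
  -- the discrete integral
  set v : ℕ → ZMod 2 := fun i => Nat.rec (F 1 1) (fun i vi => vi + F (g ^ i) g) i with hv
  have hv0 : v 0 = F 1 1 := rfl
  have hvs : ∀ i, v (i + 1) = v i + F (g ^ i) g := fun _ => rfl
  have hadd : ∀ i j, v (i + j) = v i + v j + F (g ^ i) (g ^ j) := by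
    intro i j
    induction j with
    | zero =>
        rw [Nat.add_zero, pow_zero, hEr (g ^ i), hv0]
        linear_combination -zmod2_add_self (F 1 1)
    | succ j ih =>
        have hidx : i + (j + 1) = (i + j) + 1 := by omega
        rw [hidx, hvs, ih, hvs]
        have key := hC (g ^ i) (g ^ j) g
        rw [← pow_add, ← pow_succ] at key
        linear_combination key - zmod2_add_self (F (g ^ j) g)
          - zmod2_add_self (F (g ^ i) (g ^ (j + 1)))
  set m := orderOf g with hm
  obtain ⟨r, hr⟩ : ∃ r : ℕ, m = 2 ^ r := by
    obtain ⟨k, hk⟩ := hp g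
    have hdvd : m ∣ 2 ^ k := orderOf_dvd_of_pow_eq_one hk
    obtain ⟨r, _, hr⟩ := (Nat.dvd_prime_pow Nat.prime_two).mp hdvd
    exact ⟨r, hr⟩
  rcases r with _ | r
  · -- trivial group
    have hg1 : g = 1 := orderOf_eq_one_iff.mp (by rw [← hm, hr, pow_zero])
    have hall : ∀ x : H, x = 1 := by
      intro x
      obtain ⟨i, hi⟩ := hgx x
      rw [← hi, hg1, one_pow]
    refine ⟨fun _ => F 1 1, fun a b => ?_⟩
    rw [hall a, hall b, one_mul]
    linear_combination zmod2_add_self (F 1 1)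
  · -- m = 2^(r+1) is even
    have hmhalf : m = 2 ^ r + 2 ^ r := by rw [hr]; ring
    have hvm : v m = F 1 1 := by
      have hsq : g ^ (2 ^ r) * g ^ (2 ^ r) = 1 := by
        rw [← pow_add, ← hmhalf, hm, pow_orderOf_eq_one]
      rw [hmhalf, hadd, hI _ hsq]
      linear_combination zmod2_add_self (v (2 ^ r))
    have hper : ∀ i k : ℕ, v (i + k * m) = v i := by
      intro i k
      induction k with
      | zero => rw [Nat.zero_mul, Nat.add_zero]
      | succ k ih =>
          have hidx : i + (k + 1) * m = (i + k * m) + m := by ring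
          rw [hidx, hadd, ih, hvm]
          rw [hm, pow_orderOf_eq_one, hEr (g ^ (i + k * orderOf g))]
          linear_combination zmod2_add_self (F 1 1)
    have hveq : ∀ i j : ℕ, g ^ i = g ^ j → v i = v j := by
      have haux : ∀ i j : ℕ, i ≤ j → g ^ i = g ^ j → v i = v j := by
        intro i j hij hpow
        have h1 : g ^ (j - i) = 1 := by
          have h2 : g ^ i * g ^ (j - i) = g ^ i * 1 := by
            rw [mul_one, ← pow_add, Nat.add_sub_cancel' hij, hpow]
          exact mul_left_cancel h2
        obtain ⟨t, ht⟩ := orderOf_dvd_of_pow_eq_one h1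
        have h3 : i + orderOf g * t = j := by
          rw [← ht]
          omega
        have h4 : i + orderOf g * t = i + t * m := by
          rw [hm, Nat.mul_comm]
        rw [← h3, h4, hper]
      intro i j hpow
      rcases le_total i j with hij | hij
      · exact haux i j hij hpow
      · exact (haux j i hij hpow.symm).symm
    set ch : H → ℕ := fun x => Classical.choose (hgx x) with hch
    have hchs : ∀ x : H, g ^ (ch x) = x := fun x => Classical.choose_spec (hgx x)
    refine ⟨fun x => v (ch x), fun a b => ?_⟩
    show v (ch b) + v (ch (a * b)) + v (ch a) = F a b
    have h1 : v (ch (a * b)) = v (ch a + ch b) := by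
      apply hveq
      rw [pow_add, hchs, hchs, hchs]
    rw [h1, hadd, hchs, hchs]
    linear_combination zmod2_add_self (v (ch a)) + zmod2_add_self (v (ch b))

end Split

/-- The central extension of `H` by `ℤ/2` attached to a 2-cocycle. -/
@[ext] structure Ext2 (H : Type u) : Type u where
  base : H
  tw : ZMod 2

section Elem

/-- Splitting for elementary abelian 2-groups, via `𝔽₂`-linear algebra. -/
lemma elem_split {H : Type u} [Group H] (F : H → H → ZMod 2)
    (hC : ∀ a b c, F b c + F (a * b) c + F a (b * c) + F a b = 0)
    (hexp : ∀ x : H, x * x = 1)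
    (hI : ∀ a : H, F a a = F 1 1) :
    ∃ U : H → ZMod 2, ∀ a b, U b + U (a * b) + U a = F a b := by
  classical
  have hE1 : ∀ x : H, F 1 x = F 1 1 := F_one_left F hC
  have hEr : ∀ x : H, F x 1 = F 1 1 := F_one_right F hC
  letI : Group (Ext2 H) :=
    { mul := fun x y => ⟨x.base * y.base, x.tw + y.tw + F x.base y.base⟩
      one := ⟨1, F 1 1⟩
      inv := fun x => x
      mul_assoc := by
        intro x y z
        refine Ext2.ext ?_ ?_
        · exact mul_assoc x.base y.base z.base
        · show (x.tw + y.tw + F x.base y.base) + z.tw + F (x.base * y.base) z.base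
            = x.tw + (y.tw + z.tw + F y.base z.base) + F x.base (y.base * z.base)
          linear_combination hC x.base y.base z.base - zmod2_add_self (F y.base z.base)
            - zmod2_add_self (F x.base (y.base * z.base))
      one_mul := by
        intro x
        refine Ext2.ext (one_mul x.base) ?_
        show F 1 1 + x.tw + F 1 x.base = x.tw
        rw [hE1 x.base]
        linear_combination zmod2_add_self (F 1 1)
      mul_one := by
        intro x
        refine Ext2.ext (mul_one x.base) ?_
        show x.tw + F 1 1 + F x.base 1 = x.tw
        rw [hEr x.base]
        linear_combination zmod2_add_self (F 1 1)
      inv_mul_cancel := by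
        intro x
        refine Ext2.ext (hexp x.base) ?_
        show x.tw + x.tw + F x.base x.base = F 1 1
        rw [hI x.base]
        linear_combination zmod2_add_self x.tw }
  have hsqE : ∀ z : Ext2 H, z * z = 1 := by
    intro z
    refine Ext2.ext (hexp z.base) ?_
    show z.tw + z.tw + F z.base z.base = F 1 1
    rw [hI z.base]
    linear_combination zmod2_add_self z.tw
  letI : CommGroup (Ext2 H) :=
    { mul_comm := exp_two_comm hsqE }
  letI : CommGroup H :=
    { mul_comm := exp_two_comm hexp }
  letI modE : Module (ZMod 2) (Additive (Ext2 H)) :=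
    AddCommGroup.zmodModule (n := 2) (by
      intro x
      rw [two_nsmul]
      exact hsqE (Additive.toMul x))
  letI modH : Module (ZMod 2) (Additive H) :=
    AddCommGroup.zmodModule (n := 2) (by
      intro x
      rw [two_nsmul]
      exact hexp (Additive.toMul x))
  haveI : Fact (Nat.Prime 2) := ⟨Nat.prime_two⟩
  let πadd : Additive (Ext2 H) →+ Additive H :=
    AddMonoidHom.mk' (fun x => Additive.ofMul (Additive.toMul x).base) (fun a b => rfl)
  let π : Additive (Ext2 H) →ₗ[ZMod 2] Additive H := πadd.toZModLinearMap 2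
  have hsurj : LinearMap.range π = ⊤ := by
    rw [LinearMap.range_eq_top]
    intro s
    exact ⟨Additive.ofMul (Ext2.mk (Additive.toMul s) 0), rfl⟩
  obtain ⟨sec, hsec⟩ := π.exists_rightInverse_of_surjective hsurj
  refine ⟨fun x => (Additive.toMul (sec (Additive.ofMul x))).tw, fun a b => ?_⟩
  have hbase : ∀ x : H, (Additive.toMul (sec (Additive.ofMul x))).base = x := by
    intro x
    have h1 : π (sec (Additive.ofMul x)) = Additive.ofMul x := by
      have := LinearMap.ext_iff.mp hsec (Additive.ofMul x)
      simpa using this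
    exact congrArg Additive.toMul h1
  have hadd : sec (Additive.ofMul (a * b))
      = sec (Additive.ofMul a) + sec (Additive.ofMul b) := by
    have : Additive.ofMul (a * b) = Additive.ofMul a + Additive.ofMul b := rfl
    rw [this, map_add]
  have hkey : (Additive.toMul (sec (Additive.ofMul (a * b)))).tw
      = (Additive.toMul (sec (Additive.ofMul a))).tw
        + (Additive.toMul (sec (Additive.ofMul b))).tw
        + F (Additive.toMul (sec (Additive.ofMul a))).base
            (Additive.toMul (sec (Additive.ofMul b))).base := by
    rw [hadd]
    rfl
  rw [hbase a, hbase b] at hkey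
  linear_combination hkey + zmod2_add_self ((Additive.toMul (sec (Additive.ofMul a))).tw)
    + zmod2_add_self ((Additive.toMul (sec (Additive.ofMul b))).tw)

end Elem

section Transfer

/-- The purely cocycle-theoretic identity behind the degree-2 transfer. -/
lemma star_identity {G : Type*} [Group G] (F : G → G → ZMod 2)
    (hC : ∀ a b c, F b c + F (a * b) c + F a (b * c) + F a b = 0)
    (hEr : ∀ x : G, F x 1 = F 1 1)
    (p p' p'' g h : G) :
    F (p⁻¹ * g * p') (p'⁻¹ * h * p'') + F (p⁻¹ * (g * h) * p'') p''⁻¹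
      + F p⁻¹ (g * h) + F (p⁻¹ * g * p') p'⁻¹ + F p⁻¹ g
      + F (p'⁻¹ * h * p'') p''⁻¹ + F p'⁻¹ h = F g h := by
  have h1 := hC (p⁻¹ * g * p') p'⁻¹ (h * p'')
  have e1 : p⁻¹ * g * p' * p'⁻¹ = p⁻¹ * g := by group
  have e2 : p'⁻¹ * (h * p'') = p'⁻¹ * h * p'' := by group
  rw [e1, e2] at h1
  have h2 := hC (p⁻¹ * g) h p''
  have e3 : p⁻¹ * g * h = p⁻¹ * (g * h) := by group
  rw [e3] at h2
  have h3 := hC p'⁻¹ h p''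
  have h4 := hC p⁻¹ g h
  have h5 := hC (p⁻¹ * (g * h)) p'' p''⁻¹
  have e5 : p'' * p''⁻¹ = 1 := by group
  rw [e5, hEr] at h5
  have h6 := hC (p'⁻¹ * h) p'' p''⁻¹
  rw [e5, hEr] at h6
  linear_combination h1 + h2 + h3 + h4 + h5 + h6 - zmod2_add_self (F g h)
    - zmod2_add_self (F p'⁻¹ (h * p'')) - zmod2_add_self (F (p⁻¹ * g) (h * p''))
    - zmod2_add_self (F h p'') - zmod2_add_self (F (p⁻¹ * g) h)
    - zmod2_add_self (F (p⁻¹ * (g * h)) p'') - zmod2_add_self (F (p'⁻¹ * h) p'')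
    - zmod2_add_self (F p'' p''⁻¹) - zmod2_add_self (F 1 1)
end Transfer

end Statement8Aux
namespace Statement8Aux

open Paper

/-- The degree-2 cochain-level transfer: a cocycle trivialized on a subgroup of odd
index is a coboundary. -/
lemma transfer {G : Type*} [Group G] [Finite G] (S : Subgroup G)
    (hodd : ¬ (2 ∣ S.index))
    (F : G → G → ZMod 2)
    (hC : ∀ a b c, F b c + F (a * b) c + F a (b * c) + F a b = 0)
    (u : ↥S → ZMod 2)
    (hu : ∀ a b : ↥S, u b + u (a * b) + u a = F ↑a ↑b) :
    ∃ U : G → ZMod 2, ∀ a b, U b + U (a * b) + U a = F a b := by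
  classical
  have hEr : ∀ x : G, F x 1 = F 1 1 := F_one_right F hC
  letI : Fintype (G ⧸ S) := Fintype.ofFinite _
  set o : G ⧸ S → G := fun c => Quotient.out c with ho'
  have ho : ∀ c : G ⧸ S, (QuotientGroup.mk (o c) : G ⧸ S) = c := fun c =>
    QuotientGroup.out_eq' c
  have hmem : ∀ (c : G ⧸ S) (g : G), (o c)⁻¹ * g * o (g⁻¹ • c) ∈ S := by
    intro c g
    have h1 : (QuotientGroup.mk (g⁻¹ * o c) : G ⧸ S) = QuotientGroup.mk (o (g⁻¹ • c)) := by
      rw [ho (g⁻¹ • c), ← smul_eq_mul]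
      exact MulAction.Quotient.mk_smul_out S g⁻¹ c
    have h2 := QuotientGroup.eq.mp h1
    have e : (g⁻¹ * o c)⁻¹ * o (g⁻¹ • c) = (o c)⁻¹ * g * o (g⁻¹ • c) := by group
    rwa [e] at h2
  set σ : (G ⧸ S) → G → ↥S := fun c g => ⟨(o c)⁻¹ * g * o (g⁻¹ • c), hmem c g⟩ with hσ'
  set W : (G ⧸ S) → G → ZMod 2 := fun c g =>
    u (σ c g) + F ((o c)⁻¹ * g * o (g⁻¹ • c)) ((o (g⁻¹ • c))⁻¹) + F ((o c)⁻¹) g with hW'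
  refine ⟨fun g => ∑ c : G ⧸ S, W c g, fun a b => ?_⟩
  show (∑ c : G ⧸ S, W c b) + (∑ c : G ⧸ S, W c (a * b)) + (∑ c : G ⧸ S, W c a) = F a b
  have hidx : ∀ c : G ⧸ S, b⁻¹ • a⁻¹ • c = (a * b)⁻¹ • c := by
    intro c
    rw [mul_inv_rev, mul_smul]
  have percell : ∀ c : G ⧸ S,
      W c b + W c (a * b) + W c a = W c b + W (a⁻¹ • c) b + F a b := by
    intro c
    have hidx1 : b⁻¹ • a⁻¹ • c = (a * b)⁻¹ • c := hidx c
    have hσmul : σ c (a * b) = σ c a * σ (a⁻¹ • c) b := by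
      refine Subtype.ext ?_
      show (o c)⁻¹ * (a * b) * o ((a * b)⁻¹ • c)
          = ((o c)⁻¹ * a * o (a⁻¹ • c)) * ((o (a⁻¹ • c))⁻¹ * b * o (b⁻¹ • a⁻¹ • c))
      rw [hidx1]
      group
    have hu1 := hu (σ c a) (σ (a⁻¹ • c) b)
    rw [← hσmul] at hu1
    have hcoe1 : ((σ c a : ↥S) : G) = (o c)⁻¹ * a * o (a⁻¹ • c) := rfl
    have hcoe2 : ((σ (a⁻¹ • c) : G → ↥S) b : G)
        = (o (a⁻¹ • c))⁻¹ * b * o ((a * b)⁻¹ • c) := by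
      show (o (a⁻¹ • c))⁻¹ * b * o (b⁻¹ • a⁻¹ • c) = _
      rw [hidx1]
    rw [hcoe1, hcoe2] at hu1
    have hstar := star_identity F hC hEr (o c) (o (a⁻¹ • c)) (o ((a * b)⁻¹ • c)) a b
    have hWb : W c b = u (σ c b) + F ((o c)⁻¹ * b * o (b⁻¹ • c)) ((o (b⁻¹ • c))⁻¹)
        + F ((o c)⁻¹) b := rfl
    have hWab : W c (a * b) = u (σ c (a * b))
        + F ((o c)⁻¹ * (a * b) * o ((a * b)⁻¹ • c)) ((o ((a * b)⁻¹ • c))⁻¹)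
        + F ((o c)⁻¹) (a * b) := rfl
    have hWa : W c a = u (σ c a) + F ((o c)⁻¹ * a * o (a⁻¹ • c)) ((o (a⁻¹ • c))⁻¹)
        + F ((o c)⁻¹) a := rfl
    have hWb' : W (a⁻¹ • c) b = u (σ (a⁻¹ • c) b)
        + F ((o (a⁻¹ • c))⁻¹ * b * o ((a * b)⁻¹ • c)) ((o ((a * b)⁻¹ • c))⁻¹)
        + F ((o (a⁻¹ • c))⁻¹) b := by
      have : W (a⁻¹ • c) b = u (σ (a⁻¹ • c) b)
          + F ((o (a⁻¹ • c))⁻¹ * b * o (b⁻¹ • a⁻¹ • c)) ((o (b⁻¹ • a⁻¹ • c))⁻¹)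
          + F ((o (a⁻¹ • c))⁻¹) b := rfl
      rw [this, hidx1]
    rw [hWb, hWab, hWa, hWb']
    linear_combination hu1 + hstar - zmod2_add_self (u (σ (a⁻¹ • c) b))
      - zmod2_add_self (F ((o (a⁻¹ • c))⁻¹ * b * o ((a * b)⁻¹ • c)) ((o ((a * b)⁻¹ • c))⁻¹))
      - zmod2_add_self (F ((o (a⁻¹ • c))⁻¹) b)
  have e1 : ∑ c : G ⧸ S, (W c b + W c (a * b) + W c a)
      = (∑ c : G ⧸ S, (W c b + W c (a * b))) + ∑ c : G ⧸ S, W c a :=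
    Finset.sum_add_distrib
  have e2 : ∑ c : G ⧸ S, (W c b + W c (a * b))
      = (∑ c : G ⧸ S, W c b) + ∑ c : G ⧸ S, W c (a * b) :=
    Finset.sum_add_distrib
  have e3 : ∑ c : G ⧸ S, (W c b + W (a⁻¹ • c) b + F a b)
      = (∑ c : G ⧸ S, (W c b + W (a⁻¹ • c) b)) + ∑ _c : G ⧸ S, F a b :=
    Finset.sum_add_distrib
  have e4 : ∑ c : G ⧸ S, (W c b + W (a⁻¹ • c) b)
      = (∑ c : G ⧸ S, W c b) + ∑ c : G ⧸ S, W (a⁻¹ • c) b :=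
    Finset.sum_add_distrib
  have hre : (∑ c : G ⧸ S, W (a⁻¹ • c) b) = ∑ c : G ⧸ S, W c b :=
    Fintype.sum_bijective (fun c : G ⧸ S => a⁻¹ • c) (MulAction.bijective a⁻¹)
      (fun c => W (a⁻¹ • c) b) (fun c => W c b) (fun c => rfl)
  have hcard : (Finset.univ : Finset (G ⧸ S)).card = S.index := by
    rw [Finset.card_univ, ← Nat.card_eq_fintype_card]
    rfl
  have hmod : S.index % 2 = 1 := by
    rcases Nat.mod_two_eq_zero_or_one S.index with hz | ho2
    · exact absurd (Nat.dvd_of_mod_eq_zero hz) hodd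
    · exact ho2
  have hone : ((S.index : ℕ) : ZMod 2) = 1 := by
    rw [← ZMod.natCast_mod, hmod, Nat.cast_one]
  calc (∑ c : G ⧸ S, W c b) + (∑ c : G ⧸ S, W c (a * b)) + ∑ c : G ⧸ S, W c a
      = ∑ c : G ⧸ S, (W c b + W c (a * b) + W c a) := by rw [e1, e2]
    _ = ∑ c : G ⧸ S, (W c b + W (a⁻¹ • c) b + F a b) :=
        Finset.sum_congr rfl (fun c _ => percell c)
    _ = ((∑ c : G ⧸ S, W c b) + ∑ c : G ⧸ S, W c b) + ∑ _c : G ⧸ S, F a b := by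
        rw [e3, e4, hre]
    _ = F a b := by
        rw [Finset.sum_const, hcard, nsmul_eq_mul, hone, one_mul]
        linear_combination zmod2_add_self (∑ c : G ⧸ S, W c b)

end Statement8Aux

/-- Every finite group whose Sylow 2-subgroups are either cyclic or
elementary abelian is 2-reduced. -/
theorem statement_8 (G : Type*) [Group G] [Finite G]
    (h : ∀ S : Sylow 2 G, IsCyclic ↥S ∨ ∀ x : ↥S, x * x = 1) :
    Paper.IsTwoReduced G := by
  classical
  intro f hf hnil
  have hC : ∀ a b c : G, f ![b, c] + f ![a * b, c] + f ![a, b * c] + f ![a, b] = 0 :=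
    Statement8Aux.rel_of_isCocycle hf
  have hI : ∀ a : G, a * a = 1 → f ![a, a] = f ![1, 1] := by
    intro a ha
    obtain ⟨k, hk, hcb⟩ := hnil
    obtain ⟨k, rfl⟩ : ∃ k', k = k' + 1 := ⟨k - 1, by omega⟩
    have hcb' : ∃ hh : (Fin (2 * k + 1) → G) → ZMod 2,
        Paper.d hh = Paper.cupPow f (k + 1) := hcb
    obtain ⟨hco, hhco⟩ := hcb'
    have h0 : Statement8Aux.phi a (Paper.cupPow f (k + 1)) = 0 := by
      rw [← hhco]
      exact Statement8Aux.phi_d a ha hco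
    rw [Statement8Aux.phi_cupPow] at h0
    have h2 : Statement8Aux.phi a f = 0 :=
      pow_eq_zero_iff (Nat.succ_ne_zero k) |>.mp h0
    rw [Statement8Aux.phi_two] at h2
    have e1 : f ![(1 : G), a] = f ![1, 1] := by
      have hx := hC 1 1 a
      rw [one_mul, one_mul] at hx
      linear_combination hx - Statement8Aux.zmod2_add_self (f ![(1 : G), a]) - Statement8Aux.zmod2_add_self (f ![(1 : G), (1 : G)])
    have e2 : f ![a, (1 : G)] = f ![1, 1] := by
      have hx := hC a 1 1
      rw [mul_one, one_mul] at hx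
      linear_combination hx - Statement8Aux.zmod2_add_self (f ![a, (1 : G)]) - Statement8Aux.zmod2_add_self (f ![(1 : G), (1 : G)])
    linear_combination h2 + e1 + e2 - Statement8Aux.zmod2_add_self (f ![a, (1 : G)])
      - Statement8Aux.zmod2_add_self (f ![(1 : G), a])
  obtain ⟨S⟩ : Nonempty (Sylow 2 G) := inferInstance
  haveI : Fact (Nat.Prime 2) := ⟨Nat.prime_two⟩
  haveI : (S : Subgroup G).FiniteIndex := ⟨Subgroup.index_ne_zero_of_finite⟩
  have hodd : ¬ (2 ∣ (S : Subgroup G).index) := Sylow.not_dvd_index S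
  set F : G → G → ZMod 2 := fun a b => f ![a, b] with hF
  have hCF : ∀ a b c : G, F b c + F (a * b) c + F a (b * c) + F a b = 0 := hC
  set F' : ↥(S : Subgroup G) → ↥(S : Subgroup G) → ZMod 2 := fun a b => F ↑a ↑b with hF'
  have hC' : ∀ a b c : ↥(S : Subgroup G),
      F' b c + F' (a * b) c + F' a (b * c) + F' a b = 0 := by
    intro a b c
    have := hCF ↑a ↑b ↑c
    exact this
  have hsol : ∃ u : ↥(S : Subgroup G) → ZMod 2, ∀ a b, u b + u (a * b) + u a = F' a b := by
    have h11 : ((1 : ↥(S : Subgroup G)) : G) = 1 := rfl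
    rcases h S with hcyc | helem
    · refine Statement8Aux.cyclic_split hcyc S.isPGroup' F' hC' ?_
      intro a ha
      have haG : (a : G) * (a : G) = 1 := by
        have := congrArg (fun x : ↥(S : Subgroup G) => (x : G)) ha
        simpa using this
      show F ↑a ↑a = F ↑(1 : ↥(S : Subgroup G)) ↑(1 : ↥(S : Subgroup G))
      rw [h11]
      exact hI _ haG
    · refine Statement8Aux.elem_split F' hC' helem ?_
      intro a
      have haG : (a : G) * (a : G) = 1 := by
        have := congrArg (fun x : ↥(S : Subgroup G) => (x : G)) (helem a)
        simpa using this
      show F ↑a ↑a = F ↑(1 : ↥(S : Subgroup G)) ↑(1 : ↥(S : Subgroup G))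
      rw [h11]
      exact hI _ haG
  obtain ⟨u, hu⟩ := hsol
  obtain ⟨U, hU⟩ := Statement8Aux.transfer (S : Subgroup G) hodd F hCF u hu
  exact Statement8Aux.isCoboundary_of_pointwise f U hU
end
end

section
/- Let H be an elementary abelian 2-group. Then every group extension 1 → Z/2Z → H' → H → 1 in which every element of order 2 in H has a lift of order 2 in H' is split, i.e., Ker(s_H) = 0, where s_H: H^2(H, Z/2Z) → Π_T H^2(T, Z/2Z) is the product of the restriction maps to all order-2 subgroups T of H. -/
open scoped TensorProduct Classical

noncomputable section

universe u

/-- If `H` is an elementary abelian 2-group, every group extension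
`1 → ℤ/2 → H' → H → 1` in which every element of order 2 of `H` lifts to an element of
order 2 of `H'` is split, i.e. `Ker(s_H) = 0`. -/
theorem statement_13 (H : Type*) [Group H] [Finite H] (helem : ∀ x : H, x * x = 1)
    (H' : Type*) [Group H'] (s : H' →* H) (hs : Function.Surjective s)
    (hker : Nat.card ↥s.ker = 2)
    (hlift : ∀ h : H, orderOf h = 2 → ∃ h' : H', s h' = h ∧ orderOf h' = 2) :
    ∃ σ : H →* H', ∀ h : H, s (σ h) = h := by
  classical
  -- the unique nontrivial element of the kernel
  obtain ⟨z, hz1, hzu⟩ := (Nat.card_eq_two_iff' (1 : s.ker)).mp hker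
  -- every element of the kernel squares to 1
  have hkersq : ∀ k : H', k ∈ s.ker → k * k = 1 := by
    intro k hk
    by_cases h1 : (⟨k, hk⟩ : s.ker) = 1
    · have hk1 : k = 1 := congrArg Subtype.val h1
      simp [hk1]
    · by_cases h2 : (⟨k, hk⟩ : s.ker) * ⟨k, hk⟩ = 1
      · exact congrArg Subtype.val h2
      · exfalso
        have e1 : (⟨k, hk⟩ : s.ker) = z := hzu _ h1
        have e2 : (⟨k, hk⟩ : s.ker) * ⟨k, hk⟩ = z := hzu _ h2
        rw [e1] at e2
        exact hz1 (mul_left_cancel (a := z) (by rw [e2, mul_one]))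
  -- kernel elements are central
  have hcentral : ∀ g k : H', k ∈ s.ker → g * k * g⁻¹ = k := by
    intro g k hk
    have hk' : g * k * g⁻¹ ∈ s.ker :=
      (MonoidHom.normal_ker s).conj_mem k hk g
    by_cases h1 : k = 1
    · simp [h1]
    · have h2 : g * k * g⁻¹ ≠ 1 := by
        intro h
        apply h1
        have := congrArg (fun x => g⁻¹ * x * g) h
        simpa [mul_assoc] using this
      have e1 : (⟨k, hk⟩ : s.ker) = z := hzu _ (by simpa using h1)
      have e2 : (⟨g * k * g⁻¹, hk'⟩ : s.ker) = z := hzu _ (by simpa using h2)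
      have := e2.trans e1.symm
      exact congrArg Subtype.val this
  -- every element of H' squares to 1
  have hsq : ∀ x : H', x * x = 1 := by
    intro x
    by_cases hx : s x = 1
    · exact hkersq x hx
    · have hord : orderOf (s x) = 2 := by
        refine orderOf_eq_prime ?_ hx
        rw [pow_two]; exact helem (s x)
      obtain ⟨h', hsh', hordh'⟩ := hlift (s x) hord
      have hh'sq : h' * h' = 1 := by
        have := pow_orderOf_eq_one h'
        rwa [hordh', pow_two] at this
      set k := h'⁻¹ * x with hkdef
      have hkmem : k ∈ s.ker := by
        simp [MonoidHom.mem_ker, hkdef, hsh', hx]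
      have hxeq : x = h' * k := by simp [hkdef]
      have hcomm : k * h' = h' * k := by
        have := hcentral h'⁻¹ k hkmem
        have := congrArg (fun y => h' * y) this
        simpa [mul_assoc] using this
      calc x * x = h' * (k * h') * k := by rw [hxeq]; group
        _ = h' * (h' * k) * k := by rw [hcomm]
        _ = (h' * h') * (k * k) := by group
        _ = 1 := by rw [hh'sq, hkersq k hkmem, one_mul]
  -- hence H' is commutative
  have hcomm' : ∀ a b : H', a * b = b * a := by
    intro a b
    have hinv : ∀ x : H', x⁻¹ = x := fun x =>
      inv_eq_of_mul_eq_one_left (hsq x)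
    calc a * b = (a * b)⁻¹ := (hinv _).symm
      _ = b⁻¹ * a⁻¹ := mul_inv_rev a b
      _ = b * a := by rw [hinv, hinv]
  letI : CommGroup H' := { (inferInstance : Group H') with mul_comm := hcomm' }
  letI : CommGroup H := { (inferInstance : Group H) with
    mul_comm := fun a b => by
      have hinv : ∀ x : H, x⁻¹ = x := fun x => inv_eq_of_mul_eq_one_left (helem x)
      calc a * b = (a * b)⁻¹ := (hinv _).symm
        _ = b⁻¹ * a⁻¹ := mul_inv_rev a b
        _ = b * a := by rw [hinv, hinv] }
  -- ZMod 2 module structures on the additive versions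
  letI : Module (ZMod 2) (Additive H') := AddCommGroup.zmodModule (by
    intro x
    show (2 : ℕ) • x = 0
    rw [two_nsmul]
    exact hsq x.toMul)
  letI : Module (ZMod 2) (Additive H) := AddCommGroup.zmodModule (by
    intro x
    show (2 : ℕ) • x = 0
    rw [two_nsmul]
    exact helem x.toMul)
  -- the surjection as a linear map
  let f : Additive H' →ₗ[ZMod 2] Additive H :=
    AddMonoidHom.toZModLinearMap 2 (MonoidHom.toAdditive s)
  have hf : LinearMap.range f = ⊤ := by
    rw [LinearMap.range_eq_top]
    exact hs
  obtain ⟨g, hg⟩ := f.exists_rightInverse_of_surjective hf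
  refine ⟨MonoidHom.toAdditive.symm g.toAddMonoidHom, fun h => ?_⟩
  have := congrArg (fun φ => φ (Additive.ofMul h)) hg
  exact this
end
end

section
/- Let G be a finite 2-group and let 1 → Z/2Z →^i G' →^s G → 1 be a group extension with the 2-lift property, with T = im(i). Then for any cyclic subgroup V of G, the subgroup s^{-1}(V) of G' is abelian and is an internal direct product of T with a subgroup U of G'. -/
open scoped TensorProduct Classical

noncomputable section

universe u

/-- Let `G` be a finite 2-group and `1 → ℤ/2 → G' →ˢ G → 1` an extension
with the 2-lift property, `T = im(i) = ker(s)`. For any cyclic subgroup `V` of `G`, the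
subgroup `s⁻¹(V)` is abelian and is the internal direct product of `T` and a subgroup `U`. -/
theorem statement_15 (G : Type*) [Group G] [Finite G] (hp : IsPGroup 2 G)
    (G' : Type*) [Group G'] (s : G' →* G) (hs : Function.Surjective s)
    (hker : Nat.card ↥s.ker = 2)
    (hlift : ∀ g : G, orderOf g = 2 → ∃ g' : G', s g' = g ∧ orderOf g' = 2)
    (V : Subgroup G) (hV : IsCyclic ↥V) :
    (∀ x ∈ V.comap s, ∀ y ∈ V.comap s, Commute x y) ∧
    ∃ U : Subgroup G', s.ker ⊓ U = ⊥ ∧ s.ker ⊔ U = V.comap s := by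
  have : Fact (Nat.Prime 2) := Nat.fact_prime_two
  -- uniqueness of the nontrivial element of the kernel
  obtain ⟨b, hb1, hbu⟩ := (Nat.card_eq_two_iff' (1 : ↥s.ker)).mp hker
  have huniq : ∀ x y : G', x ∈ s.ker → y ∈ s.ker → x ≠ 1 → y ≠ 1 → x = y := by
    intro x y hx hy hx1 hy1
    have h1 : (⟨x, hx⟩ : ↥s.ker) = b := hbu _ (by simp [Subtype.ext_iff, hx1])
    have h2 : (⟨y, hy⟩ : ↥s.ker) = b := hbu _ (by simp [Subtype.ext_iff, hy1])
    simpa [Subtype.ext_iff] using h1.trans h2.symm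
  have hsq : ∀ x : G', x ∈ s.ker → x ^ 2 = 1 := by
    intro x hx
    by_cases h1 : x = 1
    · simp [h1]
    · by_contra h2
      have hx2 : x ^ 2 ∈ s.ker := by simpa [sq] using mul_mem hx hx
      have hxx : x ^ 2 = x := huniq _ _ hx2 hx h2 h1
      have : x * x = x * 1 := by simpa [sq, mul_one] using hxx
      exact h1 (mul_left_cancel this)
  -- kernel elements are central
  have hcent : ∀ t w : G', t ∈ s.ker → w * t = t * w := by
    intro t w ht
    by_cases h1 : t = 1
    · simp [h1]
    · have hc : w * t * w⁻¹ ∈ s.ker := (MonoidHom.normal_ker s).conj_mem t ht w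
      have hc1 : w * t * w⁻¹ ≠ 1 := by
        simp only [ne_eq, mul_inv_eq_one, mul_eq_left]
        exact fun h => h1 (by simpa using h)
      have heq : w * t * w⁻¹ = t := huniq _ _ hc ht hc1 h1
      calc w * t = (w * t * w⁻¹) * w := by group
        _ = t * w := by rw [heq]
  -- the restricted hom
  set W := V.comap s with hW
  let f : ↥W →* ↥V := (s.comp W.subtype).codRestrict V (fun x => x.2)
  have hfker : ∀ t : ↥W, t ∈ f.ker → (t : G') ∈ s.ker := by
    intro t ht
    have h : f t = 1 := ht
    have : s (t : G') = 1 := by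
      exact congrArg Subtype.val h
    exact this
  have hcomm' : ∀ a b : ↥W, a * b = b * a := by
    apply commutative_of_cyclic_center_quotient f
    intro t ht
    rw [Subgroup.mem_center_iff]
    intro w
    refine Subtype.ext ?_
    simpa using hcent (t : G') (w : G') (hfker t ht)
  have hcomm : ∀ x ∈ W, ∀ y ∈ W, Commute x y := by
    intro x hx y hy
    exact congrArg Subtype.val (hcomm' ⟨x, hx⟩ ⟨y, hy⟩)
  refine ⟨hcomm, ?_⟩
  -- generator of V
  obtain ⟨v, hv⟩ := hV.exists_generator
  set vG : G := (v : G) with hvG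
  have hgen : ∀ x ∈ V, ∃ m : ℤ, vG ^ m = x := by
    intro x hx
    obtain ⟨m, hm⟩ := Subgroup.mem_zpowers_iff.mp (hv ⟨x, hx⟩)
    refine ⟨m, ?_⟩
    have := congrArg Subtype.val hm
    simpa [hvG] using this
  have hvV : vG ∈ V := v.2
  obtain ⟨k, hk⟩ := (IsPGroup.iff_orderOf.mp hp) vG
  set n : ℕ := orderOf vG with hn
  -- find a lift of vG killed by n
  have hexists : ∃ w₀ : G', s w₀ = vG ∧ w₀ ^ n = 1 := by
    rcases k with _ | k'
    · have hn1 : n = 1 := by simpa using hk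
      have hvg1 : vG = 1 := orderOf_eq_one_iff.mp hn1
      exact ⟨1, by simp [hvg1], by simp⟩
    · obtain ⟨w, hw⟩ := hs vG
      have hne : n = 2 ^ k' * 2 := by rw [hk, pow_succ]
      set g : G := vG ^ (2 ^ k') with hg
      have hg2 : g ^ 2 = 1 := by
        rw [hg, ← pow_mul, ← hne, hn]; exact pow_orderOf_eq_one vG
      have hgne : g ≠ 1 := by
        intro h
        have hdvd : n ∣ 2 ^ k' := orderOf_dvd_of_pow_eq_one h
        rw [hk] at hdvd
        have hle := Nat.le_of_dvd (by positivity) hdvd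
        have hlt : (2:ℕ) ^ k' < 2 ^ (k' + 1) := Nat.pow_lt_pow_succ (by norm_num)
        omega
      have hog : orderOf g = 2 := orderOf_eq_prime hg2 hgne
      obtain ⟨g', hsg', hog'⟩ := hlift g hog
      set c : G' := w ^ (2 ^ k') with hc
      have hsc : s c = g := by rw [hc, map_pow, hw]
      have hkermem : c * g'⁻¹ ∈ s.ker := by
        rw [MonoidHom.mem_ker, map_mul, map_inv, hsc, hsg', mul_inv_cancel]
      have hgV : g ∈ V := by rw [hg]; exact pow_mem hvV _
      have hcW : c ∈ W := by rw [hW, Subgroup.mem_comap, hsc]; exact hgV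
      have hg'W : g' ∈ W := by rw [hW, Subgroup.mem_comap, hsg']; exact hgV
      have hcg : Commute c g'⁻¹ := (hcomm c hcW g' hg'W).inv_right
      have hsq1 : (c * g'⁻¹) ^ 2 = 1 := hsq _ hkermem
      have hg'2 : g' ^ 2 = 1 := by rw [← hog']; exact pow_orderOf_eq_one g'
      have hc2 : c ^ 2 = 1 := by
        have := hcg.mul_pow 2
        rw [hsq1, inv_pow, hg'2, inv_one, mul_one] at this
        exact this.symm
      exact ⟨w, hw, by rw [hne, pow_mul, ← hc, hc2]⟩
  obtain ⟨w₀, hsw₀, hw₀n⟩ := hexists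
  refine ⟨Subgroup.zpowers w₀, ?_, ?_⟩
  · rw [eq_bot_iff]
    rintro x ⟨hxk, hxu⟩
    obtain ⟨m, hm⟩ := Subgroup.mem_zpowers_iff.mp hxu
    have hsx : s x = 1 := hxk
    have hvgm : vG ^ m = 1 := by
      rw [← hsw₀, ← map_zpow, hm, hsx]
    have hdvd : (n : ℤ) ∣ m := orderOf_dvd_iff_zpow_eq_one.mpr hvgm
    obtain ⟨q, hq⟩ := hdvd
    have : x = 1 := by
      rw [← hm, hq, zpow_mul, zpow_natCast, hw₀n, one_zpow]
    simp [this]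
  · apply le_antisymm
    · apply sup_le
      · intro x hx
        rw [hW, Subgroup.mem_comap]
        have : s x = 1 := hx
        rw [this]; exact V.one_mem
      · rw [Subgroup.zpowers_le]
        rw [hW, Subgroup.mem_comap, hsw₀]; exact hvV
    · intro x hx
      rw [hW, Subgroup.mem_comap] at hx
      obtain ⟨m, hm⟩ := hgen (s x) hx
      have hker' : x * (w₀ ^ m)⁻¹ ∈ s.ker := by
        rw [MonoidHom.mem_ker, map_mul, map_inv, map_zpow, hsw₀, hm, mul_inv_cancel]
      have hx1 : x * (w₀ ^ m)⁻¹ ∈ s.ker ⊔ Subgroup.zpowers w₀ :=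
        Subgroup.mem_sup_left hker'
      have hx2 : w₀ ^ m ∈ s.ker ⊔ Subgroup.zpowers w₀ :=
        Subgroup.mem_sup_right (Subgroup.zpow_mem _ (Subgroup.mem_zpowers w₀) m)
      simpa using mul_mem hx1 hx2
end
end

section
/- Let G be a finite group of even order n and let f: G → S_n be the permutation representation given by left multiplication of G on itself. Then Im(f) is contained in the alternating group A_n if and only if the Sylow 2-subgroups of G are non-cyclic. -/
open scoped TensorProduct Classical

noncomputable section

universe u

namespace Stmt17Aux

open Equiv Subgroup

noncomputable def myE {G : Type*} [Group G] (H : Subgroup G) : G ≃ (G ⧸ H) × H where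
  toFun x := (↑x, ⟨(Quotient.out (QuotientGroup.mk (s := H) x))⁻¹ * x, by
    rw [← QuotientGroup.eq]; exact QuotientGroup.out_eq' _⟩)
  invFun p := Quotient.out p.1 * (p.2 : G)
  left_inv x := by simp
  right_inv p := by
    obtain ⟨q, h, hh⟩ := p
    have h1 : QuotientGroup.mk (s := H) (Quotient.out q * h) = q := by
      rw [QuotientGroup.mk_mul_of_mem _ hh, QuotientGroup.out_eq']
    simp only [h1, Prod.mk.injEq, true_and, Subtype.ext_iff]
    group

lemma myE_equivariant {G : Type*} [Group G] (g : G) :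
    (myE (zpowers g)).permCongr (Equiv.mulRight g) =
      Equiv.prodCongrRight (fun _ : G ⧸ zpowers g =>
        Equiv.mulRight (⟨g, mem_zpowers g⟩ : zpowers g)) := by
  ext ⟨q, h⟩
  · simp [myE, permCongr_apply, QuotientGroup.mk_mul_of_mem _ h.2,
      QuotientGroup.mk_mul_of_mem _ (mem_zpowers g), QuotientGroup.out_eq']
  · have h1 : QuotientGroup.mk (s := zpowers g) (Quotient.out q * ((h : G) * g)) = q := by
      rw [QuotientGroup.mk_mul_of_mem _ (mul_mem h.2 (mem_zpowers g)), QuotientGroup.out_eq']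
    simp only [myE, permCongr_apply, coe_fn_mk, coe_mulRight, prodCongrRight_apply,
      Equiv.coe_fn_symm_mk, mul_assoc, h1]
    rw [MulMemClass.coe_mul]; group

open scoped Classical

lemma sign_mulLeft_eq {G : Type*} [Group G] [Fintype G] [DecidableEq G] (g : G) (hg : g ≠ 1) :
    Equiv.Perm.sign (Equiv.mulLeft g) =
      (-(-1 : ℤˣ) ^ orderOf g) ^ (Fintype.card G / orderOf g) := by
  set H := zpowers g with hH
  set g' : H := ⟨g, mem_zpowers g⟩ with hg'
  -- g' generates H
  have hgen : ∀ h : H, ∃ k : ℤ, g' ^ k = h := by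
    rintro ⟨h, hh⟩
    obtain ⟨k, hk⟩ := hh
    exact ⟨k, Subtype.ext hk⟩
  have hg'1 : g' ≠ 1 := fun h => hg (congrArg Subtype.val h)
  -- mulRight g' on H is fixed-point free
  have hfpf : ∀ x : H, Equiv.mulRight g' x ≠ x := by
    intro x hx
    exact hg'1 (by simpa using hx)
  -- it is a cycle
  have hcyc : (Equiv.mulRight g').IsCycle := by
    refine ⟨1, hfpf 1, fun y _ => ?_⟩
    obtain ⟨k, hk⟩ := hgen y
    exact ⟨k, by simp [Equiv.zpow_mulRight, hk]⟩
  have hsupp : (Equiv.mulRight g').support = Finset.univ := by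
    ext x; simpa using hfpf x
  have hcardH : Fintype.card H = orderOf g := Fintype.card_zpowers
  have hsign1 : Equiv.Perm.sign (Equiv.mulRight g') = -(-1 : ℤˣ) ^ orderOf g := by
    rw [hcyc.sign, hsupp, Finset.card_univ, hcardH]
  -- transfer along myE
  have h2 : Equiv.Perm.sign (Equiv.mulRight g : Equiv.Perm G) =
      (-(-1 : ℤˣ) ^ orderOf g) ^ Fintype.card (G ⧸ H) := by
    rw [← Equiv.Perm.sign_permCongr (myE H), myE_equivariant g,
      Equiv.Perm.sign_prodCongrRight]
    simp [hsign1]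
    exact congrArg (· ^ Fintype.card (G ⧸ H)) hsign1
  -- mulLeft g is conjugate to mulRight g⁻¹
  have h3 : (Equiv.inv G).permCongr (Equiv.mulLeft g) = Equiv.mulRight g⁻¹ := by
    ext x
    rw [Equiv.permCongr_apply]
    simp only [Equiv.inv_symm, Equiv.inv_apply, Equiv.coe_mulLeft, Equiv.coe_mulRight,
      mul_inv_rev, inv_inv]
  have h4 : Equiv.Perm.sign (Equiv.mulLeft g) = Equiv.Perm.sign (Equiv.mulRight g) := by
    rw [← Equiv.Perm.sign_permCongr (Equiv.inv G), h3, ← Equiv.inv_mulRight,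
      Equiv.Perm.sign_inv]
  have h5 : Fintype.card (G ⧸ H) = Fintype.card G / orderOf g := by
    have := Subgroup.card_eq_card_quotient_mul_card_subgroup H
    simp only [Nat.card_eq_fintype_card] at this
    rw [hcardH] at this
    exact (Nat.div_eq_of_eq_mul_left (orderOf_pos g) this).symm
  rw [h4, h2, h5]

end Stmt17Aux


/-- For a finite group `G` of even order, the image of the left regular
representation `f : G → S_{|G|}` lands in the alternating group iff the Sylow 2-subgroups of
`G` are non-cyclic. -/
theorem statement_17 (G : Type*) [Group G] [Fintype G] [DecidableEq G]
    (hev : Even (Nat.card G)) :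
    (∀ g : G, Equiv.mulLeft g ∈ alternatingGroup G) ↔
      ∀ S : Sylow 2 G, ¬ IsCyclic ↥S := by
  classical
  haveI : Fact (Nat.Prime 2) := ⟨Nat.prime_two⟩
  set n := Nat.card G with hn
  have hnF : n = Fintype.card G := Nat.card_eq_fintype_card
  have hn0 : n ≠ 0 := Nat.card_pos.ne'
  have h2n : 2 ∣ n := hev.two_dvd
  set k := n.factorization 2 with hk
  have hk1 : 1 ≤ k := (Nat.Prime.factorization_pos_of_dvd Nat.prime_two hn0 h2n)
  -- sign criterion: for g ≠ 1, mulLeft g ∈ A ↔ Even ((orderOf g + 1) * (n / orderOf g))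
  have hcrit : ∀ g : G, g ≠ 1 →
      (Equiv.mulLeft g ∈ alternatingGroup G ↔
        Even ((orderOf g + 1) * (n / orderOf g))) := by
    intro g hg
    rw [Equiv.Perm.mem_alternatingGroup, Stmt17Aux.sign_mulLeft_eq g hg, ← hnF]
    have : (-(-1 : ℤˣ) ^ orderOf g) = (-1 : ℤˣ) ^ (orderOf g + 1) := by
      rw [pow_succ, mul_neg_one]
    rw [this, ← pow_mul, neg_one_pow_eq_one_iff_even (by decide)]
  constructor
  · -- image in A_n → no cyclic Sylow 2
    intro hA S hScyc
    obtain ⟨x, hx⟩ := IsCyclic.exists_generator (α := ↥S)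
    have hcardS : Nat.card ↥S = 2 ^ k := Sylow.card_eq_multiplicity S
    have hordx : orderOf (x : G) = 2 ^ k := by
      rw [Subgroup.orderOf_coe, orderOf_eq_card_of_forall_mem_zpowers hx, hcardS]
    have hx1 : (x : G) ≠ 1 := by
      intro h
      have : orderOf (x : G) = 1 := by rw [h, orderOf_one]
      rw [hordx] at this
      have : 2 ^ 1 ≤ 2 ^ k := Nat.pow_le_pow_right (by norm_num) hk1
      omega
    have := (hcrit _ hx1).mp (hA (x : G))
    rw [hordx] at this
    have hodd1 : Odd (2 ^ k + 1) :=
      (Nat.even_pow.mpr ⟨even_two, by omega⟩).add_one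
    have hodd2 : Odd (n / 2 ^ k) :=
      Nat.odd_iff.mpr (Nat.two_dvd_ne_zero.mp (Nat.not_dvd_ordCompl Nat.prime_two hn0))
    exact (Nat.not_even_iff_odd.mpr (hodd1.mul hodd2)) this
  · -- no cyclic Sylow 2 → image in A_n
    intro hS g
    rcases eq_or_ne g 1 with rfl | hg
    · rw [Equiv.mulLeft_one]; exact one_mem _
    rw [hcrit g hg]
    by_contra hodd
    rw [Nat.not_even_iff_odd, Nat.odd_mul] at hodd
    obtain ⟨hd1, hnd⟩ := hodd
    set d := orderOf g with hd
    have hd0 : d ≠ 0 := (orderOf_pos g).ne'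
    have hdvd : d ∣ n := by rw [hn]; exact orderOf_dvd_natCard g
    have hdn : d * (n / d) = n := Nat.mul_div_cancel' hdvd
    have hnd0 : n / d ≠ 0 := by
      intro h; rw [h, mul_zero] at hdn; exact hn0 hdn.symm
    -- the 2-adic valuation of d equals that of n
    have hfact : d.factorization 2 = k := by
      have h1 : n.factorization 2 = d.factorization 2 + (n / d).factorization 2 := by
        conv_lhs => rw [← hdn]
        rw [Nat.factorization_mul hd0 hnd0]
        simp
      have h2 : (n / d).factorization 2 = 0 :=
        Nat.factorization_eq_zero_of_not_dvd
          (Nat.two_dvd_ne_zero.mpr (Nat.odd_iff.mp hnd))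
      omega
    -- g ^ (d / 2^k) has order 2^k
    have h2kd : 2 ^ k ∣ d := by rw [← hfact]; exact Nat.ordProj_dvd d 2
    set h := g ^ (d / 2 ^ k) with hh
    have hordh : orderOf h = 2 ^ k := by
      rw [hh, orderOf_pow, ← hd, Nat.gcd_eq_right (Nat.div_dvd_of_dvd h2kd),
        Nat.div_div_self h2kd hd0]
    have hcardP : Nat.card ↥(Subgroup.zpowers h) = 2 ^ n.factorization 2 := by
      rw [Nat.card_zpowers, hordh, hk]
    refine hS (Sylow.ofCard (Subgroup.zpowers h) (by rw [← hn]; exact hcardP)) ?_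
    show IsCyclic ↥(Subgroup.zpowers h)
    constructor
    refine ⟨⟨h, Subgroup.mem_zpowers h⟩, ?_⟩
    rintro ⟨y, hy⟩
    obtain ⟨m, hm⟩ := hy
    exact ⟨m, Subtype.ext hm⟩
end
end
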